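/- Let F = {(x, f_0(x)) : x ∈ [x_0^1, x_N^1]} ⊂ ℝ³ and H = {(x, h_0(x)) : x ∈ [x_0^2, x_M^2]} ⊂ ℝ³ be the graphs of the fixed point (f_0, h_0) of T. Then F and H are nonempty compact sets satisfying F = (⋃_{n=1}^{K^{11}} w_n^{11}(F)) ∪ (⋃_{n=1}^{K^{12}} w_n^{12}(H)) and H = (⋃_{n=1}^{K^{21}} w_n^{21}(F)) ∪ (⋃_{n=1}^{K^{22}} w_n^{22}(H)). -/

import Mathlib

open Set


lemma mono_aux (x : ℕ → ℝ) (N : ℕ) (h : ∀ i, i < N → x i < x (i + 1)) :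
    ∀ i j, i ≤ j → j ≤ N → x i ≤ x j := by
  intro i j hij hjN
  induction j with
  | zero => simp [Nat.le_zero.mp hij]
  | succ j ih =>
    rcases Nat.lt_or_ge i (j + 1) with hlt | hge
    · exact le_trans (ih (by omega) (by omega)) (le_of_lt (h j (by omega)))
    · have : i = j + 1 := by omega
      simp [this]

lemma smono_aux (x : ℕ → ℝ) (N : ℕ) (h : ∀ i, i < N → x i < x (i + 1))
    (i j : ℕ) (hij : i < j) (hjN : j ≤ N) : x i < x j :=
  lt_of_lt_of_le (h i (by omega)) (mono_aux x N h (i + 1) j (by omega) hjN)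

lemma cover_aux (x : ℕ → ℝ) :
    ∀ N, 1 ≤ N → (∀ i, i < N → x i < x (i + 1)) → ∀ t, x 0 ≤ t → t ≤ x N →
      ∃ m, 1 ≤ m ∧ m ≤ N ∧ x (m - 1) ≤ t ∧ t ≤ x m := by
  intro N
  induction N with
  | zero => omega
  | succ N ih =>
    intro _ hmono t h0 h1
    rcases Nat.eq_zero_or_pos N with hN0 | hN1
    · exact ⟨1, le_rfl, by omega, by simpa [hN0] using h0, by simpa [hN0] using h1⟩
    · by_cases ht : t ≤ x N
      · obtain ⟨m, hm1, hm2, hm3, hm4⟩ := ih hN1 (fun i hi => hmono i (by omega)) t h0 ht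
        exact ⟨m, hm1, by omega, hm3, hm4⟩
      · exact ⟨N + 1, by omega, le_rfl, by simpa using le_of_not_ge ht, h1⟩

lemma affine_image (a b p q u v : ℝ) (hpq : p < q) (huv : u < v)
    (h1 : a * p + b = u) (h2 : a * q + b = v) :
    (fun x => a * x + b) '' Set.Icc p q = Set.Icc u v := by
  have ha : 0 < a := by nlinarith
  rw [show Set.Icc u v = Set.Icc (a * p + b) (a * q + b) by rw [h1, h2]]
  exact Set.image_affine_Icc' ha b p q

lemma graph_decomp (g : ℝ → ℝ × ℝ) (x : ℕ → ℝ) (N K1 K2 : ℕ)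
    (hK : K1 + K2 = N) (hN : 1 ≤ N) (hmono : ∀ i, i < N → x i < x (i + 1)) :
    (fun t => (t, g t)) '' Set.Icc (x 0) (x N) =
      (⋃ n ∈ Set.Icc 1 K1, (fun t => (t, g t)) '' Set.Icc (x (n - 1)) (x n)) ∪
      (⋃ n ∈ Set.Icc 1 K2,
        (fun t => (t, g t)) '' Set.Icc (x (K1 + n - 1)) (x (K1 + n))) := by
  apply Set.Subset.antisymm
  · rintro p ⟨t, ⟨ht0, htN⟩, rfl⟩
    obtain ⟨m, hm1, hmN, hml, hmr⟩ := cover_aux x N hN hmono t ht0 htN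
    by_cases hcase : m ≤ K1
    · exact Or.inl (Set.mem_biUnion ⟨hm1, hcase⟩ ⟨t, ⟨hml, hmr⟩, rfl⟩)
    · refine Or.inr (Set.mem_biUnion (show (m - K1) ∈ Set.Icc 1 K2 from ⟨by omega, by omega⟩) ?_)
      have h1 : K1 + (m - K1) - 1 = m - 1 := by omega
      have h2 : K1 + (m - K1) = m := by omega
      rw [h1, h2]
      exact ⟨t, ⟨hml, hmr⟩, rfl⟩
  · rintro p (hp | hp) <;> simp only [Set.mem_iUnion] at hp <;>
      obtain ⟨n, ⟨hn1, hn2⟩, t, ⟨hl, hr⟩, rfl⟩ := hp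
    · exact ⟨t, ⟨le_trans (mono_aux x N hmono 0 (n - 1) (by omega) (by omega)) hl,
        le_trans hr (mono_aux x N hmono n N (by omega) le_rfl)⟩, rfl⟩
    · exact ⟨t, ⟨le_trans (mono_aux x N hmono 0 (K1 + n - 1) (by omega) (by omega)) hl,
        le_trans hr (mono_aux x N hmono (K1 + n) N (by omega) le_rfl)⟩, rfl⟩


theorem stmt_11
    (N M : ℕ) (hN : 2 ≤ N) (hM : 2 ≤ M)
    (x1 y1 z1 x2 y2 z2 : ℕ → ℝ)
    (hx1 : ∀ i, i < N → x1 i < x1 (i + 1))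
    (hx2 : ∀ j, j < M → x2 j < x2 (j + 1))
    (hstar1 : ∀ i, 1 ≤ i → i ≤ N → x1 i - x1 (i - 1) < x2 M - x2 0)
    (hstar2 : ∀ j, 1 ≤ j → j ≤ M → x2 j - x2 (j - 1) < x1 N - x1 0)
    (K : Fin 2 → Fin 2 → ℕ)
    (hK1 : K 0 0 + K 0 1 = N) (hK2 : K 1 0 + K 1 1 = M)
    (a b c d e f α β γ : Fin 2 → Fin 2 → ℕ → ℝ)
    (hα : ∀ r s n, 1 ≤ n → n ≤ K r s → |α r s n| < 1)
    (hγ : ∀ r s n, 1 ≤ n → n ≤ K r s → |γ r s n| < 1)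
    (hβγ : ∀ r s n, 1 ≤ n → n ≤ K r s → |β r s n| + |γ r s n| < 1)
    (w : Fin 2 → Fin 2 → ℕ → ℝ × ℝ × ℝ → ℝ × ℝ × ℝ)
    (hw : ∀ r s n p, w r s n p =
      (a r s n * p.1 + b r s n,
       c r s n * p.1 + α r s n * p.2.1 + β r s n * p.2.2 + d r s n,
       e r s n * p.1 + γ r s n * p.2.2 + f r s n))
    (hj11 : ∀ n, 1 ≤ n → n ≤ K 0 0 →
      w 0 0 n (x1 0, y1 0, z1 0) = (x1 (n - 1), y1 (n - 1), z1 (n - 1)) ∧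
      w 0 0 n (x1 N, y1 N, z1 N) = (x1 n, y1 n, z1 n))
    (hj12 : ∀ n, 1 ≤ n → n ≤ K 0 1 →
      w 0 1 n (x2 0, y2 0, z2 0) =
        (x1 (K 0 0 + n - 1), y1 (K 0 0 + n - 1), z1 (K 0 0 + n - 1)) ∧
      w 0 1 n (x2 M, y2 M, z2 M) = (x1 (K 0 0 + n), y1 (K 0 0 + n), z1 (K 0 0 + n)))
    (hj21 : ∀ n, 1 ≤ n → n ≤ K 1 0 →
      w 1 0 n (x1 0, y1 0, z1 0) = (x2 (n - 1), y2 (n - 1), z2 (n - 1)) ∧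
      w 1 0 n (x1 N, y1 N, z1 N) = (x2 n, y2 n, z2 n))
    (hj22 : ∀ n, 1 ≤ n → n ≤ K 1 1 →
      w 1 1 n (x2 0, y2 0, z2 0) =
        (x2 (K 1 0 + n - 1), y2 (K 1 0 + n - 1), z2 (K 1 0 + n - 1)) ∧
      w 1 1 n (x2 M, y2 M, z2 M) = (x2 (K 1 0 + n), y2 (K 1 0 + n), z2 (K 1 0 + n)))
    (f0 h0 : ℝ → ℝ × ℝ)
    (hf0 : (ContinuousOn f0 (Set.Icc (x1 0) (x1 N)) ∧ f0 (x1 0) = (y1 0, z1 0) ∧ f0 (x1 N) = (y1 N, z1 N)))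
    (hh0 : (ContinuousOn h0 (Set.Icc (x2 0) (x2 M)) ∧ h0 (x2 0) = (y2 0, z2 0) ∧ h0 (x2 M) = (y2 M, z2 M)))
    (hfix : (∀ n, 1 ≤ n → n ≤ K 0 0 → ∀ x ∈ Set.Icc (x1 0) (x1 N),
      f0 (a 0 0 n * x + b 0 0 n) =
        (c 0 0 n * x + α 0 0 n * (f0 x).1 + β 0 0 n * (f0 x).2 + d 0 0 n,
         e 0 0 n * x + γ 0 0 n * (f0 x).2 + f 0 0 n)) ∧
    (∀ n, 1 ≤ n → n ≤ K 0 1 → ∀ x ∈ Set.Icc (x2 0) (x2 M),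
      f0 (a 0 1 n * x + b 0 1 n) =
        (c 0 1 n * x + α 0 1 n * (h0 x).1 + β 0 1 n * (h0 x).2 + d 0 1 n,
         e 0 1 n * x + γ 0 1 n * (h0 x).2 + f 0 1 n)) ∧
    (∀ n, 1 ≤ n → n ≤ K 1 0 → ∀ x ∈ Set.Icc (x1 0) (x1 N),
      h0 (a 1 0 n * x + b 1 0 n) =
        (c 1 0 n * x + α 1 0 n * (f0 x).1 + β 1 0 n * (f0 x).2 + d 1 0 n,
         e 1 0 n * x + γ 1 0 n * (f0 x).2 + f 1 0 n)) ∧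
    (∀ n, 1 ≤ n → n ≤ K 1 1 → ∀ x ∈ Set.Icc (x2 0) (x2 M),
      h0 (a 1 1 n * x + b 1 1 n) =
        (c 1 1 n * x + α 1 1 n * (h0 x).1 + β 1 1 n * (h0 x).2 + d 1 1 n,
         e 1 1 n * x + γ 1 1 n * (h0 x).2 + f 1 1 n))) :
    ((fun x => (x, f0 x)) '' Set.Icc (x1 0) (x1 N)).Nonempty ∧
    IsCompact ((fun x => (x, f0 x)) '' Set.Icc (x1 0) (x1 N)) ∧
    ((fun x => (x, h0 x)) '' Set.Icc (x2 0) (x2 M)).Nonempty ∧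
    IsCompact ((fun x => (x, h0 x)) '' Set.Icc (x2 0) (x2 M)) ∧
    ((fun x => (x, f0 x)) '' Set.Icc (x1 0) (x1 N) =
      (⋃ n ∈ Set.Icc 1 (K 0 0), w 0 0 n '' ((fun x => (x, f0 x)) '' Set.Icc (x1 0) (x1 N))) ∪
      (⋃ n ∈ Set.Icc 1 (K 0 1), w 0 1 n '' ((fun x => (x, h0 x)) '' Set.Icc (x2 0) (x2 M)))) ∧
    ((fun x => (x, h0 x)) '' Set.Icc (x2 0) (x2 M) =
      (⋃ n ∈ Set.Icc 1 (K 1 0), w 1 0 n '' ((fun x => (x, f0 x)) '' Set.Icc (x1 0) (x1 N))) ∪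
      (⋃ n ∈ Set.Icc 1 (K 1 1), w 1 1 n '' ((fun x => (x, h0 x)) '' Set.Icc (x2 0) (x2 M)))) := by
  
  obtain ⟨hf0c, hf0l, hf0r⟩ := hf0
  obtain ⟨hh0c, hh0l, hh0r⟩ := hh0
  obtain ⟨hfix11, hfix12, hfix21, hfix22⟩ := hfix
  have hx1lt : x1 0 < x1 N := smono_aux x1 N hx1 0 N (by omega) le_rfl
  have hx2lt : x2 0 < x2 M := smono_aux x2 M hx2 0 M (by omega) le_rfl
  have himg11 : ∀ n, 1 ≤ n → n ≤ K 0 0 →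
      w 0 0 n '' ((fun x => (x, f0 x)) '' Set.Icc (x1 0) (x1 N)) =
        (fun t => (t, f0 t)) '' Set.Icc (x1 (n - 1)) (x1 n) := by
    intro n h1 h2
    rw [← Set.image_comp]
    have key : ∀ x ∈ Set.Icc (x1 0) (x1 N),
        (w 0 0 n ∘ fun x => (x, f0 x)) x =
          ((fun t => (t, f0 t)) ∘ fun x => a 0 0 n * x + b 0 0 n) x := by
      intro x hx
      simp only [Function.comp_apply, hw]
      rw [hfix11 n h1 h2 x hx]
    rw [Set.image_congr key, Set.image_comp]
    refine congrArg _ ?_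
    have e1 : a 0 0 n * x1 0 + b 0 0 n = x1 (n - 1) := by
      have h := (hj11 n h1 h2).1; rw [hw] at h; exact congrArg Prod.fst h
    have e2 : a 0 0 n * x1 N + b 0 0 n = x1 n := by
      have h := (hj11 n h1 h2).2; rw [hw] at h; exact congrArg Prod.fst h
    exact affine_image _ _ _ _ _ _ hx1lt
      (smono_aux x1 N hx1 (n - 1) n (by omega) (by omega)) e1 e2
  have himg12 : ∀ n, 1 ≤ n → n ≤ K 0 1 →
      w 0 1 n '' ((fun x => (x, h0 x)) '' Set.Icc (x2 0) (x2 M)) =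
        (fun t => (t, f0 t)) '' Set.Icc (x1 (K 0 0 + n - 1)) (x1 (K 0 0 + n)) := by
    intro n h1 h2
    rw [← Set.image_comp]
    have key : ∀ x ∈ Set.Icc (x2 0) (x2 M),
        (w 0 1 n ∘ fun x => (x, h0 x)) x =
          ((fun t => (t, f0 t)) ∘ fun x => a 0 1 n * x + b 0 1 n) x := by
      intro x hx
      simp only [Function.comp_apply, hw]
      rw [hfix12 n h1 h2 x hx]
    rw [Set.image_congr key, Set.image_comp]
    refine congrArg _ ?_
    have e1 : a 0 1 n * x2 0 + b 0 1 n = x1 (K 0 0 + n - 1) := by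
      have h := (hj12 n h1 h2).1; rw [hw] at h; exact congrArg Prod.fst h
    have e2 : a 0 1 n * x2 M + b 0 1 n = x1 (K 0 0 + n) := by
      have h := (hj12 n h1 h2).2; rw [hw] at h; exact congrArg Prod.fst h
    exact affine_image _ _ _ _ _ _ hx2lt
      (smono_aux x1 N hx1 (K 0 0 + n - 1) (K 0 0 + n) (by omega) (by omega)) e1 e2
  have himg21 : ∀ n, 1 ≤ n → n ≤ K 1 0 →
      w 1 0 n '' ((fun x => (x, f0 x)) '' Set.Icc (x1 0) (x1 N)) =
        (fun t => (t, h0 t)) '' Set.Icc (x2 (n - 1)) (x2 n) := by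
    intro n h1 h2
    rw [← Set.image_comp]
    have key : ∀ x ∈ Set.Icc (x1 0) (x1 N),
        (w 1 0 n ∘ fun x => (x, f0 x)) x =
          ((fun t => (t, h0 t)) ∘ fun x => a 1 0 n * x + b 1 0 n) x := by
      intro x hx
      simp only [Function.comp_apply, hw]
      rw [hfix21 n h1 h2 x hx]
    rw [Set.image_congr key, Set.image_comp]
    refine congrArg _ ?_
    have e1 : a 1 0 n * x1 0 + b 1 0 n = x2 (n - 1) := by
      have h := (hj21 n h1 h2).1; rw [hw] at h; exact congrArg Prod.fst h
    have e2 : a 1 0 n * x1 N + b 1 0 n = x2 n := by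
      have h := (hj21 n h1 h2).2; rw [hw] at h; exact congrArg Prod.fst h
    exact affine_image _ _ _ _ _ _ hx1lt
      (smono_aux x2 M hx2 (n - 1) n (by omega) (by omega)) e1 e2
  have himg22 : ∀ n, 1 ≤ n → n ≤ K 1 1 →
      w 1 1 n '' ((fun x => (x, h0 x)) '' Set.Icc (x2 0) (x2 M)) =
        (fun t => (t, h0 t)) '' Set.Icc (x2 (K 1 0 + n - 1)) (x2 (K 1 0 + n)) := by
    intro n h1 h2
    rw [← Set.image_comp]
    have key : ∀ x ∈ Set.Icc (x2 0) (x2 M),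
        (w 1 1 n ∘ fun x => (x, h0 x)) x =
          ((fun t => (t, h0 t)) ∘ fun x => a 1 1 n * x + b 1 1 n) x := by
      intro x hx
      simp only [Function.comp_apply, hw]
      rw [hfix22 n h1 h2 x hx]
    rw [Set.image_congr key, Set.image_comp]
    refine congrArg _ ?_
    have e1 : a 1 1 n * x2 0 + b 1 1 n = x2 (K 1 0 + n - 1) := by
      have h := (hj22 n h1 h2).1; rw [hw] at h; exact congrArg Prod.fst h
    have e2 : a 1 1 n * x2 M + b 1 1 n = x2 (K 1 0 + n) := by
      have h := (hj22 n h1 h2).2; rw [hw] at h; exact congrArg Prod.fst h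
    exact affine_image _ _ _ _ _ _ hx2lt
      (smono_aux x2 M hx2 (K 1 0 + n - 1) (K 1 0 + n) (by omega) (by omega)) e1 e2
  refine ⟨⟨(x1 0, f0 (x1 0)), ⟨x1 0, ⟨le_rfl, le_of_lt hx1lt⟩, rfl⟩⟩,
    isCompact_Icc.image_of_continuousOn (ContinuousOn.prodMk continuousOn_id hf0c),
    ⟨(x2 0, h0 (x2 0)), ⟨x2 0, ⟨le_rfl, le_of_lt hx2lt⟩, rfl⟩⟩,
    isCompact_Icc.image_of_continuousOn (ContinuousOn.prodMk continuousOn_id hh0c), ?_, ?_⟩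
  · rw [Set.iUnion₂_congr (fun n hn => himg11 n hn.1 hn.2),
      Set.iUnion₂_congr (fun n hn => himg12 n hn.1 hn.2)]
    exact graph_decomp f0 x1 N (K 0 0) (K 0 1) hK1 (by omega) hx1
  · rw [Set.iUnion₂_congr (fun n hn => himg21 n hn.1 hn.2),
      Set.iUnion₂_congr (fun n hn => himg22 n hn.1 hn.2)]
    exact graph_decomp h0 x2 M (K 1 0) (K 1 1) hK2 (by omega) hx2
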